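/- For every odd positive integer p, the double sum ∑_{m=1}^{p} ∑_{k=0}^{p} (-1)^{m+k} (1/m) · C(p,k)^2 · C(p, m+k) equals ∑_{k=0}^p (-1)^k C(p,k)^3 H_k, where C(p, m+k) = 0 when m+k > p and H_k is the k-th harmonic number. -/

import Mathlib

open Finset

/-- Auxiliary sum: `G p k = ∑_{m=1}^{p} (-1)^m (1/m) C(p, m+k)`. -/
def Gaux (p k : ℕ) : ℚ :=
  ∑ i ∈ Finset.range p, (-1:ℚ)^(i+1) * (1/(i+1 : ℚ)) * ((p.choose (i+1+k)) : ℚ)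

lemma alt_sum_choose (p : ℕ) :
    ∑ i ∈ Finset.range (p+1), (-1:ℚ)^(i+1) * (((p+1).choose (i+1)) : ℚ) = -1 := by
  have h := Int.alternating_sum_range_choose (n := p+1)
  rw [Finset.sum_range_succ'] at h
  simp only [Nat.choose_zero_right, pow_zero, Nat.cast_one, mul_one,
    if_neg (Nat.succ_ne_zero p)] at h
  have h2 : (∑ i ∈ Finset.range (p+1), (-1:ℤ)^(i+1) * ((p+1).choose (i+1) : ℤ)) = -1 := by
    linarith
  calc ∑ i ∈ Finset.range (p+1), (-1:ℚ)^(i+1) * (((p+1).choose (i+1)) : ℚ)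
      = ((∑ i ∈ Finset.range (p+1), (-1:ℤ)^(i+1) * ((p+1).choose (i+1) : ℤ) : ℤ) : ℚ) := by
        push_cast; ring
    _ = -1 := by rw [h2]; norm_num

lemma Gaux_eq (p : ℕ) : ∀ k, Gaux p k = -(p.choose k : ℚ) * (harmonic p - harmonic k) := by
  induction p with
  | zero =>
    intro k
    cases k with
    | zero => simp [Gaux]
    | succ j => simp [Gaux, Nat.choose_eq_zero_of_lt (Nat.succ_pos j)]
  | succ p ih =>
    intro k
    have hsplit : Gaux (p+1) k
        = (∑ i ∈ Finset.range (p+1), (-1:ℚ)^(i+1) * (1/(i+1:ℚ)) * (p.choose (i+k) : ℚ))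
          + Gaux p k := by
      have h1 : ∀ i ∈ Finset.range (p+1),
          (-1:ℚ)^(i+1) * (1/(i+1:ℚ)) * (((p+1).choose (i+1+k)) : ℚ)
          = (-1:ℚ)^(i+1) * (1/(i+1:ℚ)) * (p.choose (i+k) : ℚ)
            + (-1:ℚ)^(i+1) * (1/(i+1:ℚ)) * (p.choose (i+1+k) : ℚ) := by
        intro i _
        have : i+1+k = (i+k)+1 := by ring
        rw [this, Nat.choose_succ_succ]
        push_cast
        ring
      rw [Gaux, Finset.sum_congr rfl h1, Finset.sum_add_distrib]
      congr 1
      rw [Finset.sum_range_succ,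
        Nat.choose_eq_zero_of_lt (by omega : p < p+1+k)]
      simp [Gaux]
    cases k with
    | zero =>
      have hA : (∑ i ∈ Finset.range (p+1), (-1:ℚ)^(i+1) * (1/(i+1:ℚ)) * (p.choose (i+0) : ℚ))
          = -1/(p+1:ℚ) := by
        have key : ∀ i ∈ Finset.range (p+1),
            (-1:ℚ)^(i+1) * (1/(i+1:ℚ)) * (p.choose (i+0) : ℚ)
            = (1/(p+1:ℚ)) * ((-1:ℚ)^(i+1) * (((p+1).choose (i+1)) : ℚ)) := by
          intro i _
          have hn : (p+1) * p.choose i = (p+1).choose (i+1) * (i+1) := by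
            simpa using Nat.add_one_mul_choose_eq p i
          have hq : ((p:ℚ)+1) * (p.choose i : ℚ) = ((p+1).choose (i+1) : ℚ) * ((i:ℚ)+1) := by
            exact_mod_cast hn
          have hi : ((i:ℚ)+1) ≠ 0 := by positivity
          have hp1 : ((p:ℚ)+1) ≠ 0 := by positivity
          field_simp
          push_cast at hq ⊢
          linear_combination hq
        rw [Finset.sum_congr rfl key, ← Finset.mul_sum, alt_sum_choose]
        ring
      rw [hsplit, hA, ih 0]
      have hp1 : ((p:ℚ)+1) ≠ 0 := by positivity
      rw [harmonic_succ]
      push_cast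
      field_simp
      simp only [Nat.choose_zero_right, Nat.cast_one, harmonic_zero]
      ring
    | succ j =>
      have hA : (∑ i ∈ Finset.range (p+1), (-1:ℚ)^(i+1) * (1/(i+1:ℚ)) * (p.choose (i+(j+1)) : ℚ))
          = Gaux p j := by
        rw [Finset.sum_range_succ, Nat.choose_eq_zero_of_lt (by omega : p < p+(j+1))]
        simp only [Nat.cast_zero, mul_zero, add_zero]
        rw [Gaux]
        apply Finset.sum_congr rfl
        intro i _
        have h2 : i+(j+1) = i+1+j := by omega
        rw [h2]
      rw [hsplit, hA, ih (j+1), ih j]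
      have hn : (p+1) * p.choose j = (p+1).choose (j+1) * (j+1) := by
        simpa using Nat.add_one_mul_choose_eq p j
      have hq : ((p:ℚ)+1) * (p.choose j : ℚ) = ((p+1).choose (j+1) : ℚ) * ((j:ℚ)+1) := by
        exact_mod_cast hn
      have hpc : ((p+1).choose (j+1) : ℚ) = (p.choose j : ℚ) + (p.choose (j+1) : ℚ) := by
        rw [Nat.choose_succ_succ]; push_cast; ring
      rw [harmonic_succ, harmonic_succ]
      have hj1 : ((j:ℚ)+1) ≠ 0 := by positivity
      have hp1 : ((p:ℚ)+1) ≠ 0 := by positivity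
      have key : (((p+1).choose (j+1)) : ℚ) / ((p:ℚ)+1) = (p.choose j : ℚ) / ((j:ℚ)+1) := by
        rw [div_eq_div_iff hp1 hj1]
        linarith [hq]
      push_cast at hpc key ⊢
      linear_combination (harmonic p - harmonic j - 1/(1+(j:ℚ))) * hpc + key

lemma alt_cube (p : ℕ) (hodd : Odd p) :
    ∑ k ∈ Finset.range (p+1), (-1:ℚ)^k * (p.choose k : ℚ)^3 = 0 := by
  have h := Finset.sum_range_reflect (fun k => (-1:ℚ)^k * (p.choose k : ℚ)^3) (p+1)
  have h2 : ∀ j ∈ Finset.range (p+1),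
      (-1:ℚ)^(p+1-1-j) * (p.choose (p+1-1-j) : ℚ)^3
      = -((-1:ℚ)^j * (p.choose j : ℚ)^3) := by
    intro j hj
    rw [Finset.mem_range] at hj
    have hjp : j ≤ p := by omega
    have e1 : p+1-1-j = p - j := by omega
    rw [e1, Nat.choose_symm hjp]
    have hsq : (-1:ℚ)^j * (-1:ℚ)^j = 1 := by
      rw [← pow_add, Even.neg_one_pow ⟨j, rfl⟩]
    have e2 : (-1:ℚ)^(p-j) * (-1:ℚ)^j = (-1:ℚ)^p := by
      rw [← pow_add]; congr 1; omega
    have e3 : (-1:ℚ)^p = -1 := Odd.neg_one_pow hodd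
    have e4 : (-1:ℚ)^(p-j) = -(-1:ℚ)^j := by
      calc (-1:ℚ)^(p-j) = (-1:ℚ)^(p-j) * ((-1:ℚ)^j * (-1:ℚ)^j) := by rw [hsq, mul_one]
        _ = ((-1:ℚ)^(p-j) * (-1:ℚ)^j) * (-1:ℚ)^j := by ring
        _ = (-1:ℚ)^p * (-1:ℚ)^j := by rw [e2]
        _ = -(-1:ℚ)^j := by rw [e3]; ring
    rw [e4]; ring
  rw [Finset.sum_congr rfl h2, Finset.sum_neg_distrib] at h
  linarith

theorem stmt6 (p : ℕ) (hodd : Odd p) (hp : 0 < p) :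
    ∑ m ∈ Finset.Icc 1 p, ∑ k ∈ Finset.range (p+1),
        (-1 : ℚ)^(m+k) * (1 / (m : ℚ)) * (p.choose k : ℚ)^2 * (p.choose (m + k) : ℚ)
      = ∑ k ∈ Finset.range (p+1), (-1 : ℚ)^k * (p.choose k : ℚ)^3 * harmonic k := by
  rw [Finset.sum_comm]
  have hinner : ∀ k ∈ Finset.range (p+1),
      ∑ m ∈ Finset.Icc 1 p,
        (-1:ℚ)^(m+k) * (1/(m:ℚ)) * (p.choose k : ℚ)^2 * (p.choose (m+k) : ℚ)
      = (-1:ℚ)^k * (p.choose k : ℚ)^2 * Gaux p k := by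
    intro k _
    rw [Gaux, Finset.mul_sum, ← Finset.Ico_add_one_right_eq_Icc, Finset.sum_Ico_eq_sum_range]
    apply Finset.sum_congr rfl
    intro i _
    have e : 1+i+k = (i+1)+k := by omega
    rw [e, pow_add]
    push_cast
    ring
  rw [Finset.sum_congr rfl hinner]
  have h3 : ∀ k ∈ Finset.range (p+1),
      (-1:ℚ)^k * (p.choose k : ℚ)^2 * Gaux p k
      = (-1:ℚ)^k * (p.choose k : ℚ)^3 * harmonic k
        - harmonic p * ((-1:ℚ)^k * (p.choose k : ℚ)^3) := by
    intro k _
    rw [Gaux_eq p k]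
    ring
  rw [Finset.sum_congr rfl h3, Finset.sum_sub_distrib, ← Finset.mul_sum,
    alt_cube p hodd, mul_zero, sub_zero]
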